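/- Let X ⊂ ℝ^M be compact and let f : X → X be Borel measurable with invariant Borel probability measure μ whose Radon–Nikodym derivative with respect to Lebesgue measure on ℝ^M is continuous. Let (ε_m)_{m≥1} be a sequence of positive numbers converging to zero, and suppose there exists a sequence of countable measurable partitions (𝒯_m)_{m≥1} of X such that every T ∈ 𝒯_m has diameter less than ε_m and for every measurable set E ⊆ X and every T ∈ 𝒯_m one has |μ(E)·μ(T) − μ(f^{−m}(E) ∩ T)| < ε_m·μ(T). Then sup_{s∈ℝ} |F_m(s) − F(s)| → 0 as m → ∞. -/

import Mathlib

open MeasureTheory Set Filter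
open scoped ENNReal NNReal

private lemma aux_pow_sub_pow {x y c : ℝ} (hy : 0 ≤ y) (hxy : y ≤ x) (hxc : x ≤ c) :
    ∀ n : ℕ, x ^ n - y ^ n ≤ n * c ^ (n - 1) * (x - y) := by
  have hx : 0 ≤ x := hy.trans hxy
  have hc : 0 ≤ c := hx.trans hxc
  have hyc : y ≤ c := hxy.trans hxc
  intro n
  induction n with
  | zero => simp
  | succ n ih =>
    have h1 : x ^ (n + 1) - y ^ (n + 1) = x * (x ^ n - y ^ n) + (x - y) * y ^ n := by ring
    have h2 : x * (x ^ n - y ^ n) ≤ c * (n * c ^ (n - 1) * (x - y)) :=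
      mul_le_mul hxc ih (sub_nonneg.2 (pow_le_pow_left₀ hy hxy n))
        hc
    have h3 : (x - y) * y ^ n ≤ (x - y) * c ^ n :=
      mul_le_mul_of_nonneg_left (pow_le_pow_left₀ hy hyc n) (sub_nonneg.2 hxy)
    rcases Nat.eq_zero_or_pos n with rfl | hn
    · simpa using h1.le.trans (by simpa using add_le_add h2 h3)
    · have hcc : c * c ^ (n - 1) = c ^ n := by
        rw [← pow_succ']
        congr 1
        omega
      have : x ^ (n + 1) - y ^ (n + 1) ≤ n * c ^ n * (x - y) + (x - y) * c ^ n := by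
        rw [h1]
        refine add_le_add (h2.trans (le_of_eq ?_)) h3
        rw [← hcc]; ring
      calc x ^ (n + 1) - y ^ (n + 1) ≤ n * c ^ n * (x - y) + (x - y) * c ^ n := this
        _ = (n + 1 : ℕ) * c ^ ((n + 1) - 1) * (x - y) := by
            simp only [Nat.add_sub_cancel]
            push_cast
            ring

private lemma aux_ennreal_le {p q r : ℝ≥0∞} {e : ℝ} (hp : p ≠ ⊤) (hq : q ≠ ⊤) (hr : r ≠ ⊤)
    (he : 0 ≤ e) (h : p.toReal ≤ q.toReal + e * r.toReal) :
    p ≤ q + ENNReal.ofReal e * r := by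
  have hfin : q + ENNReal.ofReal e * r ≠ ⊤ :=
    ENNReal.add_ne_top.2 ⟨hq, ENNReal.mul_ne_top ENNReal.ofReal_ne_top hr⟩
  refine (ENNReal.toReal_le_toReal hp hfin).1 ?_
  rw [ENNReal.toReal_add hq (ENNReal.mul_ne_top ENNReal.ofReal_ne_top hr),
    ENNReal.toReal_mul, ENNReal.toReal_ofReal he]
  exact h

/-- **Statement 2.** Let `X ⊂ ℝ^M` be compact and `f : X → X` Borel measurable with invariant
Borel probability measure `μ` whose Radon–Nikodym derivative with respect to Lebesgue measure
is continuous. Let `(ε_m)` be positive numbers converging to zero and suppose there are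
countable measurable partitions `𝒯_m` of `X` whose elements have diameter less than `ε_m` and
such that `|μ(E)·μ(T) − μ(f^{−m}(E) ∩ T)| < ε_m·μ(T)` for every measurable `E ⊆ X` and every
`T ∈ 𝒯_m`. Then `sup_s |F_m(s) − F(s)| → 0` as `m → ∞`, where
`F_m(s) = μ{x : d(x, f^m(x)) < s}` and `F(s) = (μ×μ){(x,y) : d(x,y) < s}`. -/
theorem cdf_uniform_convergence (M : ℕ)
    (X : Set (EuclideanSpace ℝ (Fin M))) (hX : IsCompact X)
    (f : EuclideanSpace ℝ (Fin M) → EuclideanSpace ℝ (Fin M))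
    (hf : Measurable f) (hfX : MapsTo f X X)
    (μ : Measure (EuclideanSpace ℝ (Fin M))) [IsProbabilityMeasure μ]
    (hinv : ∀ E : Set (EuclideanSpace ℝ (Fin M)), MeasurableSet E → μ (f ⁻¹' E) = μ E)
    (g : EuclideanSpace ℝ (Fin M) → ℝ) (hg : ContinuousOn g X)
    (hμ : μ = (volume.restrict X).withDensity (fun x => ENNReal.ofReal (g x)))
    (ε : ℕ → ℝ) (hεpos : ∀ m, 1 ≤ m → 0 < ε m) (hεlim : Tendsto ε atTop (nhds 0))
    (𝒯 : ℕ → Set (Set (EuclideanSpace ℝ (Fin M))))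
    (hcount : ∀ m, 1 ≤ m → (𝒯 m).Countable)
    (hmeas : ∀ m, 1 ≤ m → ∀ T ∈ 𝒯 m, MeasurableSet T)
    (hdisj : ∀ m, 1 ≤ m → (𝒯 m).Pairwise Disjoint)
    (hcover : ∀ m, 1 ≤ m → ⋃₀ 𝒯 m = X)
    (hdiam : ∀ m, 1 ≤ m → ∀ T ∈ 𝒯 m, EMetric.diam T < ENNReal.ofReal (ε m))
    (hmix : ∀ m, 1 ≤ m → ∀ T ∈ 𝒯 m, ∀ E ⊆ X, MeasurableSet E →
      |(μ E).toReal * (μ T).toReal - (μ (f^[m] ⁻¹' E ∩ T)).toReal| < ε m * (μ T).toReal) :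
    Tendsto (fun m : ℕ => ⨆ s : ℝ,
      |(μ {x | dist x (f^[m] x) < s}).toReal -
          ((μ.prod μ) {p | dist p.1 p.2 < s}).toReal|) atTop (nhds 0) := by
  classical
  rcases Nat.eq_zero_or_pos M with hM | hM
  · -- degenerate case `M = 0` : the space is a single point
    subst hM
    haveI : Subsingleton (EuclideanSpace ℝ (Fin 0)) :=
      ⟨fun a b => PiLp.ext fun i => Fin.elim0 i⟩
    have hzero : ∀ m : ℕ, ∀ s : ℝ,
        (μ {x | dist x (f^[m] x) < s}).toReal =
          ((μ.prod μ) {p | dist p.1 p.2 < s}).toReal := by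
      intro m s
      have h1 : {x : EuclideanSpace ℝ (Fin 0) | dist x (f^[m] x) < s}
          = {_x : EuclideanSpace ℝ (Fin 0) | 0 < s} := by
        ext x
        rw [mem_setOf_eq, mem_setOf_eq, Subsingleton.elim (f^[m] x) x, dist_self]
      have h2 : {p : EuclideanSpace ℝ (Fin 0) × EuclideanSpace ℝ (Fin 0) | dist p.1 p.2 < s}
          = {_p : EuclideanSpace ℝ (Fin 0) × EuclideanSpace ℝ (Fin 0) | 0 < s} := by
        ext p
        rw [mem_setOf_eq, mem_setOf_eq, Subsingleton.elim p.2 p.1, dist_self]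
      rw [h1, h2]
      rcases lt_or_ge 0 s with hs | hs
      · simp [setOf_true, hs, measure_univ]
      · simp [setOf_false, hs.not_gt, measure_empty]
    have : (fun m : ℕ => ⨆ s : ℝ,
        |(μ {x | dist x (f^[m] x) < s}).toReal -
          ((μ.prod μ) {p | dist p.1 p.2 < s}).toReal|) = fun _ => (0 : ℝ) := by
      funext m
      simp only [hzero m, sub_self, abs_zero, ciSup_const]
    rw [this]
    exact tendsto_const_nhds
  -- main case `M ≥ 1`
  haveI : Nonempty (Fin M) := ⟨⟨0, hM⟩⟩
  have hXm : MeasurableSet X := hX.isClosed.measurableSet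
  -- `μ` lives on `X`
  have hXc : μ Xᶜ = 0 := by
    rw [hμ, withDensity_apply _ hXm.compl, Measure.restrict_restrict hXm.compl,
      compl_inter_self, Measure.restrict_empty, lintegral_zero_measure]
  have hX1 : μ X = 1 := (prob_compl_eq_zero_iff hXm).1 hXc
  have hne : X.Nonempty := nonempty_of_measure_ne_zero (by rw [hX1]; exact one_ne_zero)
  -- bound on the density
  obtain ⟨C, hC0, hgC⟩ : ∃ C : ℝ, 0 ≤ C ∧ ∀ x ∈ X, g x ≤ C := by
    obtain ⟨x₀, hx₀X, hx₀⟩ := hX.exists_isMaxOn hne hg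
    exact ⟨max (g x₀) 0, le_max_right _ _, fun x hx => (hx₀ hx).trans (le_max_left _ _)⟩
  have hμle : ∀ S : Set (EuclideanSpace ℝ (Fin M)), MeasurableSet S →
      μ S ≤ ENNReal.ofReal C * volume S := by
    intro S hS
    rw [hμ, withDensity_apply _ hS, Measure.restrict_restrict hS]
    calc ∫⁻ x in S ∩ X, ENNReal.ofReal (g x) ∂volume
        ≤ ∫⁻ _x in S ∩ X, ENNReal.ofReal C ∂volume :=
          setLIntegral_mono' (hS.inter hXm) fun x hx =>
            ENNReal.ofReal_le_ofReal (hgC x hx.2)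
      _ = ENNReal.ofReal C * volume (S ∩ X) := setLIntegral_const _ _
      _ ≤ ENNReal.ofReal C * volume S :=
          mul_le_mul_right (measure_mono inter_subset_left) _
  -- diameter bound
  obtain ⟨D, hD0, hD⟩ : ∃ D : ℝ, 0 ≤ D ∧ ∀ x ∈ X, ∀ y ∈ X, dist x y ≤ D :=
    ⟨Metric.diam X, Metric.diam_nonneg, fun x hx y hy =>
      Metric.dist_le_diam_of_mem hX.isBounded hx hy⟩
  -- volume of balls
  set κ : ℝ≥0∞ := ENNReal.ofReal (Real.sqrt Real.pi ^ M / Real.Gamma (M / 2 + 1)) with hκ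
  have hball : ∀ (x : EuclideanSpace ℝ (Fin M)) (r : ℝ),
      volume (Metric.ball x r) = ENNReal.ofReal r ^ M * κ := by
    intro x r
    rw [EuclideanSpace.volume_ball, Fintype.card_fin]
  -- measurability facts
  have hSmeas : ∀ r : ℝ, MeasurableSet
      {p : EuclideanSpace ℝ (Fin M) × EuclideanSpace ℝ (Fin M) | dist p.1 p.2 < r} := by
    intro r
    exact measurableSet_lt (measurable_fst.dist measurable_snd) measurable_const
  have hker : ∀ r : ℝ, Measurable fun x : EuclideanSpace ℝ (Fin M) =>
      μ {y | dist x y < r} := by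
    intro r
    exact measurable_measure_prodMk_left (hSmeas r)
  have hprodeq : ∀ r : ℝ,
      (μ.prod μ) {p : EuclideanSpace ℝ (Fin M) × EuclideanSpace ℝ (Fin M) | dist p.1 p.2 < r}
        = ∫⁻ x, μ {y | dist x y < r} ∂μ := by
    intro r
    rw [Measure.prod_apply (hSmeas r)]
    rfl
  have hAmeas : ∀ m : ℕ, ∀ s : ℝ,
      MeasurableSet {x : EuclideanSpace ℝ (Fin M) | dist x (f^[m] x) < s} := by
    intro m s
    exact measurableSet_lt (measurable_id.dist (hf.iterate m)) measurable_const
  -- the Lipschitz constant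
  set K : ℝ := C * (M * (D + 1) ^ (M - 1)) * κ.toReal with hKdef
  have hK0 : 0 ≤ K := by
    apply mul_nonneg (mul_nonneg hC0 _) ENNReal.toReal_nonneg
    positivity
  -- Lipschitz-type estimate for F
  have hLip : ∀ a b : ℝ, a ≤ b → b ≤ a + 1 →
      ((μ.prod μ) {p : EuclideanSpace ℝ (Fin M) × EuclideanSpace ℝ (Fin M) |
          dist p.1 p.2 < b}).toReal -
        ((μ.prod μ) {p : EuclideanSpace ℝ (Fin M) × EuclideanSpace ℝ (Fin M) |
          dist p.1 p.2 < a}).toReal ≤ K * (b - a) := by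
    intro a b hab hba
    set Sa := {p : EuclideanSpace ℝ (Fin M) × EuclideanSpace ℝ (Fin M) | dist p.1 p.2 < a}
      with hSa
    set Sb := {p : EuclideanSpace ℝ (Fin M) × EuclideanSpace ℝ (Fin M) | dist p.1 p.2 < b}
      with hSb
    have hKba : 0 ≤ K * (b - a) := mul_nonneg hK0 (by linarith)
    rcases le_or_gt b 0 with hb0 | hb0
    · -- both sets are empty
      have hSbe : Sb = ∅ := by
        ext p; simp only [hSb, mem_setOf_eq, mem_empty_iff_false, iff_false, not_lt]
        exact hb0.trans dist_nonneg
      have hSae : Sa = ∅ := by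
        ext p; simp only [hSa, mem_setOf_eq, mem_empty_iff_false, iff_false, not_lt]
        exact (hab.trans hb0).trans dist_nonneg
      rw [hSbe, hSae]
      simpa using hKba
    rcases lt_or_ge D a with hDa | hDa
    · -- both measures are equal to one
      have hsub : X ×ˢ X ⊆ Sa := by
        rintro ⟨x, y⟩ ⟨hx, hy⟩
        exact lt_of_le_of_lt (hD x hx y hy) hDa
      have h1 : (1 : ℝ≥0∞) ≤ (μ.prod μ) Sa := by
        calc (1 : ℝ≥0∞) = (μ.prod μ) (X ×ˢ X) := by
              rw [Measure.prod_prod, hX1, one_mul]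
          _ ≤ (μ.prod μ) Sa := measure_mono hsub
      have hae : ((μ.prod μ) Sa).toReal = 1 := by
        have h2 : (μ.prod μ) Sa ≤ 1 := prob_le_one
        have := le_antisymm h2 h1
        rw [this]; simp
      have hble : ((μ.prod μ) Sb).toReal ≤ 1 := by
        simpa using ENNReal.toReal_mono ENNReal.one_ne_top (prob_le_one (μ := μ.prod μ) (s := Sb))
      rw [hae]
      linarith
    -- main case : 0 < b, a ≤ D
    have hbD : b ≤ D + 1 := by linarith
    set a' : ℝ := max a 0 with ha'
    have ha'0 : 0 ≤ a' := le_max_right _ _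
    have ha'b : a' ≤ b := max_le hab hb0.le
    have hofa : ENNReal.ofReal a = ENNReal.ofReal a' := by
      rcases le_total a 0 with h | h
      · rw [ENNReal.ofReal_of_nonpos h, ha', max_eq_right h, ENNReal.ofReal_zero]
      · rw [ha', max_eq_left h]
    -- volume of annuli
    have hvol : ∀ x : EuclideanSpace ℝ (Fin M),
        volume (Metric.ball x b \ Metric.ball x a)
          = ENNReal.ofReal (b ^ M - a' ^ M) * κ := by
      intro x
      rw [measure_diff (Metric.ball_subset_ball hab) measurableSet_ball.nullMeasurableSet
        (by
          rw [hball]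
          exact ENNReal.mul_ne_top (ENNReal.pow_ne_top ENNReal.ofReal_ne_top)
            (by rw [hκ]; exact ENNReal.ofReal_ne_top)),
        hball, hball, hofa, ← ENNReal.sub_mul (fun _ _ => by rw [hκ]; exact ENNReal.ofReal_ne_top),
        ← ENNReal.ofReal_pow hb0.le, ← ENNReal.ofReal_pow ha'0,
        ← ENNReal.ofReal_sub _ (by positivity)]
    -- slices of the product set
    have hslice : ∀ x : EuclideanSpace ℝ (Fin M),
        μ ({y | dist x y < b} \ {y | dist x y < a})
          ≤ ENNReal.ofReal C * (ENNReal.ofReal (b ^ M - a' ^ M) * κ) := by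
      intro x
      have hset : {y : EuclideanSpace ℝ (Fin M) | dist x y < b} \ {y | dist x y < a}
          = Metric.ball x b \ Metric.ball x a := by
        ext y
        simp only [mem_diff, mem_setOf_eq, Metric.mem_ball, dist_comm y x]
      rw [hset, ← hvol x]
      exact hμle _ (measurableSet_ball.diff measurableSet_ball)
    -- the product measure of the annulus
    have hdiff : (μ.prod μ) (Sb \ Sa)
        ≤ ENNReal.ofReal C * (ENNReal.ofReal (b ^ M - a' ^ M) * κ) := by
      rw [Measure.prod_apply ((hSmeas b).diff (hSmeas a))]
      have hpre : ∀ x : EuclideanSpace ℝ (Fin M),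
          Prod.mk x ⁻¹' (Sb \ Sa) = {y | dist x y < b} \ {y | dist x y < a} := fun x => rfl
      calc ∫⁻ x, μ (Prod.mk x ⁻¹' (Sb \ Sa)) ∂μ
          ≤ ∫⁻ _x, ENNReal.ofReal C * (ENNReal.ofReal (b ^ M - a' ^ M) * κ) ∂μ := by
            refine lintegral_mono fun x => ?_
            rw [hpre x]
            exact hslice x
        _ = ENNReal.ofReal C * (ENNReal.ofReal (b ^ M - a' ^ M) * κ) := by
            rw [lintegral_const, measure_univ, mul_one]
    -- bound the power difference
    have hpow : b ^ M - a' ^ M ≤ (M * (D + 1) ^ (M - 1)) * (b - a) := by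
      have h1 := aux_pow_sub_pow ha'0 ha'b hbD M
      have h2 : b - a' ≤ b - a := by
        have : a ≤ a' := le_max_left _ _
        linarith
      calc b ^ M - a' ^ M ≤ M * (D + 1) ^ (M - 1) * (b - a') := h1
        _ ≤ M * (D + 1) ^ (M - 1) * (b - a) := by
            refine mul_le_mul_of_nonneg_left h2 (by positivity)
    -- put everything together
    have hfinal : ((μ.prod μ) (Sb \ Sa)).toReal ≤ K * (b - a) := by
      have hle2 : (μ.prod μ) (Sb \ Sa)
          ≤ ENNReal.ofReal C * (ENNReal.ofReal ((M * (D + 1) ^ (M - 1)) * (b - a)) * κ) :=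
        hdiff.trans (by
          refine mul_le_mul_right (mul_le_mul_left (ENNReal.ofReal_le_ofReal hpow) _) _)
      have hfin : ENNReal.ofReal C * (ENNReal.ofReal ((M * (D + 1) ^ (M - 1)) * (b - a)) * κ)
          ≠ ⊤ := by
        refine ENNReal.mul_ne_top ENNReal.ofReal_ne_top
          (ENNReal.mul_ne_top ENNReal.ofReal_ne_top (by rw [hκ]; exact ENNReal.ofReal_ne_top))
      have := ENNReal.toReal_mono hfin hle2
      rw [ENNReal.toReal_mul, ENNReal.toReal_mul, ENNReal.toReal_ofReal hC0,
        ENNReal.toReal_ofReal (mul_nonneg (by positivity) (by linarith))] at this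
      calc ((μ.prod μ) (Sb \ Sa)).toReal
          ≤ C * ((M * (D + 1) ^ (M - 1)) * (b - a) * κ.toReal) := this
        _ = K * (b - a) := by rw [hKdef]; ring
    have hsplit : ((μ.prod μ) Sb).toReal
        ≤ ((μ.prod μ) Sa).toReal + ((μ.prod μ) (Sb \ Sa)).toReal := by
      have h1 : (μ.prod μ) Sb ≤ (μ.prod μ) Sa + (μ.prod μ) (Sb \ Sa) :=
        le_trans (measure_le_inter_add_diff _ _ _)
          (add_le_add_left (measure_mono inter_subset_right) _)
      have := ENNReal.toReal_mono
        (ENNReal.add_ne_top.2 ⟨measure_ne_top _ _, measure_ne_top _ _⟩) h1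
      rwa [ENNReal.toReal_add (measure_ne_top _ _) (measure_ne_top _ _)] at this
    linarith

  -- the key estimate coming from the mixing partitions
  have key : ∀ m : ℕ, 1 ≤ m → ∀ s : ℝ,
      μ {x | dist x (f^[m] x) < s}
          ≤ (μ.prod μ) {p | dist p.1 p.2 < s + 2 * ε m} + ENNReal.ofReal (ε m)
        ∧ (μ.prod μ) {p | dist p.1 p.2 < s - 2 * ε m}
          ≤ μ {x | dist x (f^[m] x) < s} + ENNReal.ofReal (ε m) := by
    intro m hm s
    have he : 0 < ε m := hεpos m hm
    haveI : Countable ↥(𝒯 m) := (hcount m hm).to_subtype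
    set A := {x | dist x (f^[m] x) < s} with hA
    have hAm : MeasurableSet A := hAmeas m s
    have hTmeas : ∀ T : ↥(𝒯 m), MeasurableSet (T : Set (EuclideanSpace ℝ (Fin M))) :=
      fun T => hmeas m hm T T.2
    have hTsub : ∀ T : ↥(𝒯 m), (T : Set (EuclideanSpace ℝ (Fin M))) ⊆ X := fun T => by
      rw [← hcover m hm]; exact subset_sUnion_of_mem T.2
    have hpair : Pairwise (Function.onFun Disjoint fun T : ↥(𝒯 m) =>
        (T : Set (EuclideanSpace ℝ (Fin M)))) :=
      fun T T' hne' => hdisj m hm T.2 T'.2 (Subtype.coe_injective.ne hne')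
    have hU : ⋃ T : ↥(𝒯 m), (T : Set (EuclideanSpace ℝ (Fin M))) = X := by
      rw [← hcover m hm, sUnion_eq_iUnion]
    have hsumμ : ∑' T : ↥(𝒯 m), μ T = 1 := by
      rw [← measure_iUnion hpair hTmeas, hU, hX1]
    have hTpos : ∀ T : ↥(𝒯 m), 0 < (μ (T : Set (EuclideanSpace ℝ (Fin M)))).toReal := by
      intro T
      have h0 := hmix m hm T T.2 ∅ (empty_subset X) MeasurableSet.empty
      simp only [measure_empty, preimage_empty, empty_inter, ENNReal.toReal_zero, zero_mul,
        sub_zero, abs_zero] at h0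
      nlinarith [ENNReal.toReal_nonneg (a := μ (T : Set (EuclideanSpace ℝ (Fin M)))), h0, he]
    have hTne : ∀ T : ↥(𝒯 m), (T : Set (EuclideanSpace ℝ (Fin M))).Nonempty := by
      intro T
      apply nonempty_of_measure_ne_zero (μ := μ)
      intro h
      have := hTpos T
      rw [h] at this
      simp at this
    choose t ht using hTne
    have hdist : ∀ T : ↥(𝒯 m), ∀ x ∈ (T : Set (EuclideanSpace ℝ (Fin M))),
        dist x (t T) < ε m := by
      intro T x hx
      have h1 : edist x (t T) ≤ EMetric.diam (T : Set (EuclideanSpace ℝ (Fin M))) :=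
        EMetric.edist_le_diam_of_mem hx (ht T)
      exact edist_lt_ofReal.1 (h1.trans_lt (hdiam m hm T T.2))
    have hmixUp : ∀ (T : ↥(𝒯 m)) (E : Set (EuclideanSpace ℝ (Fin M))), E ⊆ X →
        MeasurableSet E →
        μ (f^[m] ⁻¹' E ∩ T) ≤ μ E * μ T + ENNReal.ofReal (ε m) * μ T := by
      intro T E hEX hE
      have h' := (abs_lt.1 (hmix m hm T T.2 E hEX hE)).1
      refine aux_ennreal_le (measure_ne_top _ _)
        (ENNReal.mul_ne_top (measure_ne_top _ _) (measure_ne_top _ _))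
        (measure_ne_top _ _) he.le ?_
      rw [ENNReal.toReal_mul]
      linarith
    have hmixDown : ∀ (T : ↥(𝒯 m)) (E : Set (EuclideanSpace ℝ (Fin M))), E ⊆ X →
        MeasurableSet E →
        μ E * μ T ≤ μ (f^[m] ⁻¹' E ∩ T) + ENNReal.ofReal (ε m) * μ T := by
      intro T E hEX hE
      have h' := (abs_lt.1 (hmix m hm T T.2 E hEX hE)).2
      refine aux_ennreal_le
        (ENNReal.mul_ne_top (measure_ne_top _ _) (measure_ne_top _ _))
        (measure_ne_top _ _) (measure_ne_top _ _) he.le ?_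
      rw [ENNReal.toReal_mul]
      linarith
    have hAX : μ A = μ (A ∩ X) := (measure_inter_conull hXc).symm
    have hdecomp : A ∩ X = ⋃ T : ↥(𝒯 m), A ∩ (T : Set (EuclideanSpace ℝ (Fin M))) := by
      rw [← hU, inter_iUnion]
    have hsumA : μ (A ∩ X) = ∑' T : ↥(𝒯 m), μ (A ∩ T) := by
      rw [hdecomp, measure_iUnion
        (hpair.mono fun T T' h => h.mono inter_subset_right inter_subset_right)
        (fun T => hAm.inter (hTmeas T))]
    constructor
    · -- upper bound
      set E : ↥(𝒯 m) → Set (EuclideanSpace ℝ (Fin M)) :=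
        fun T => Metric.ball (t T) (s + ε m) ∩ X with hEdef
      have hEmeas : ∀ T, MeasurableSet (E T) := fun T => measurableSet_ball.inter hXm
      have hEX : ∀ T, E T ⊆ X := fun T => inter_subset_right
      have hincl : ∀ T : ↥(𝒯 m), A ∩ (T : Set (EuclideanSpace ℝ (Fin M)))
          ⊆ f^[m] ⁻¹' (E T) ∩ T := by
        rintro T x ⟨hxA, hxT⟩
        refine ⟨⟨?_, (hfX.iterate m) (hTsub T hxT)⟩, hxT⟩
        have h1 : dist x (f^[m] x) < s := hxA
        have h2 : dist x (t T) < ε m := hdist T x hxT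
        have h3 : dist (f^[m] x) (t T) ≤ dist (f^[m] x) x + dist x (t T) := dist_triangle _ _ _
        rw [dist_comm (f^[m] x) x] at h3
        rw [Metric.mem_ball]
        linarith
      have hterm : ∀ T : ↥(𝒯 m),
          μ (A ∩ T) ≤ μ (E T) * μ T + ENNReal.ofReal (ε m) * μ T :=
        fun T => (measure_mono (hincl T)).trans (hmixUp T (E T) (hEX T) (hEmeas T))
      have hterm2 : ∀ T : ↥(𝒯 m), μ (E T) * μ T
          ≤ ∫⁻ x in (T : Set (EuclideanSpace ℝ (Fin M))),
              μ {y | dist x y < s + 2 * ε m} ∂μ := by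
        intro T
        rw [← setLIntegral_const]
        refine setLIntegral_mono' (hTmeas T) fun x hx => measure_mono ?_
        rintro y ⟨hy1, -⟩
        rw [Metric.mem_ball] at hy1
        have h2 : dist x (t T) < ε m := hdist T x hx
        have h3 : dist x y ≤ dist x (t T) + dist (t T) y := dist_triangle _ _ _
        rw [dist_comm (t T) y] at h3
        rw [mem_setOf_eq]
        linarith
      calc μ A = ∑' T : ↥(𝒯 m), μ (A ∩ T) := by rw [hAX, hsumA]
        _ ≤ ∑' T : ↥(𝒯 m), (μ (E T) * μ T + ENNReal.ofReal (ε m) * μ T) :=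
            ENNReal.tsum_le_tsum hterm
        _ = (∑' T : ↥(𝒯 m), μ (E T) * μ T)
            + ENNReal.ofReal (ε m) * ∑' T : ↥(𝒯 m), μ T := by
            rw [ENNReal.tsum_add, ENNReal.tsum_mul_left]
        _ ≤ (∑' T : ↥(𝒯 m), ∫⁻ x in (T : Set (EuclideanSpace ℝ (Fin M))),
              μ {y | dist x y < s + 2 * ε m} ∂μ) + ENNReal.ofReal (ε m) * 1 := by
            exact add_le_add (ENNReal.tsum_le_tsum hterm2) (by rw [hsumμ])
        _ = (∫⁻ x in X, μ {y | dist x y < s + 2 * ε m} ∂μ) + ENNReal.ofReal (ε m) := by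
            rw [← lintegral_iUnion hTmeas hpair, hU, mul_one]
        _ ≤ (μ.prod μ) {p | dist p.1 p.2 < s + 2 * ε m} + ENNReal.ofReal (ε m) := by
            rw [hprodeq]
            exact add_le_add_left (setLIntegral_le_lintegral _ _) _
    · -- lower bound
      set E' : ↥(𝒯 m) → Set (EuclideanSpace ℝ (Fin M)) :=
        fun T => Metric.ball (t T) (s - ε m) ∩ X with hE'def
      have hE'meas : ∀ T, MeasurableSet (E' T) := fun T => measurableSet_ball.inter hXm
      have hE'X : ∀ T, E' T ⊆ X := fun T => inter_subset_right
      have hincl' : ∀ T : ↥(𝒯 m), f^[m] ⁻¹' (E' T) ∩ T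
          ⊆ A ∩ (T : Set (EuclideanSpace ℝ (Fin M))) := by
        rintro T x ⟨⟨hx1, -⟩, hxT⟩
        refine ⟨?_, hxT⟩
        rw [Metric.mem_ball] at hx1
        have h2 : dist x (t T) < ε m := hdist T x hxT
        have h3 : dist x (f^[m] x) ≤ dist x (t T) + dist (t T) (f^[m] x) := dist_triangle _ _ _
        rw [dist_comm (t T) (f^[m] x)] at h3
        rw [hA, mem_setOf_eq]
        linarith
      have hterm' : ∀ T : ↥(𝒯 m),
          (∫⁻ x in (T : Set (EuclideanSpace ℝ (Fin M))),
              μ {y | dist x y < s - 2 * ε m} ∂μ) ≤ μ (E' T) * μ T := by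
        intro T
        rw [← setLIntegral_const]
        refine setLIntegral_mono' (hTmeas T) fun x hx => ?_
        have hxint : μ {y | dist x y < s - 2 * ε m}
            = μ ({y | dist x y < s - 2 * ε m} ∩ X) := (measure_inter_conull hXc).symm
        rw [hxint]
        refine measure_mono ?_
        rintro y ⟨hy1, hy2⟩
        rw [mem_setOf_eq] at hy1
        have h2 : dist x (t T) < ε m := hdist T x hx
        have h3 : dist y (t T) ≤ dist y x + dist x (t T) := dist_triangle _ _ _
        rw [dist_comm y x] at h3
        exact ⟨Metric.mem_ball.2 (by linarith), hy2⟩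
      have hterm'' : ∀ T : ↥(𝒯 m),
          μ (E' T) * μ T ≤ μ (A ∩ T) + ENNReal.ofReal (ε m) * μ T := by
        intro T
        refine (hmixDown T (E' T) (hE'X T) (hE'meas T)).trans ?_
        exact add_le_add_left (measure_mono (hincl' T)) _
      calc (μ.prod μ) {p | dist p.1 p.2 < s - 2 * ε m}
          = ∫⁻ x, μ {y | dist x y < s - 2 * ε m} ∂μ := hprodeq _
        _ = ∫⁻ x in X, μ {y | dist x y < s - 2 * ε m} ∂μ := by
            rw [← lintegral_add_compl (fun x => μ {y | dist x y < s - 2 * ε m}) hXm,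
              setLIntegral_measure_zero _ _ hXc, add_zero]
        _ = ∑' T : ↥(𝒯 m), ∫⁻ x in (T : Set (EuclideanSpace ℝ (Fin M))),
              μ {y | dist x y < s - 2 * ε m} ∂μ := by
            rw [← hU, lintegral_iUnion hTmeas hpair]
        _ ≤ ∑' T : ↥(𝒯 m), (μ (A ∩ T) + ENNReal.ofReal (ε m) * μ T) :=
            ENNReal.tsum_le_tsum fun T => (hterm' T).trans (hterm'' T)
        _ = (∑' T : ↥(𝒯 m), μ (A ∩ T)) + ENNReal.ofReal (ε m) * ∑' T : ↥(𝒯 m), μ T := by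
            rw [ENNReal.tsum_add, ENNReal.tsum_mul_left]
        _ ≤ μ A + ENNReal.ofReal (ε m) := by
            rw [hsumμ, mul_one, ← hsumA, ← hAX]

  -- pass to real numbers
  have bound : ∀ m : ℕ, 1 ≤ m → ε m ≤ 1 / 2 → ∀ s : ℝ,
      |(μ {x | dist x (f^[m] x) < s}).toReal -
          ((μ.prod μ) {p | dist p.1 p.2 < s}).toReal| ≤ (2 * K + 1) * ε m := by
    intro m hm hhalf s
    have he : 0 < ε m := hεpos m hm
    obtain ⟨kA, kB⟩ := key m hm s
    have hfinA : (μ.prod μ) {p : EuclideanSpace ℝ (Fin M) × EuclideanSpace ℝ (Fin M) |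
        dist p.1 p.2 < s + 2 * ε m} + ENNReal.ofReal (ε m) ≠ ⊤ :=
      ENNReal.add_ne_top.2 ⟨measure_ne_top _ _, ENNReal.ofReal_ne_top⟩
    have hfinB : μ {x | dist x (f^[m] x) < s} + ENNReal.ofReal (ε m) ≠ ⊤ :=
      ENNReal.add_ne_top.2 ⟨measure_ne_top _ _, ENNReal.ofReal_ne_top⟩
    have hA : (μ {x | dist x (f^[m] x) < s}).toReal
        ≤ ((μ.prod μ) {p | dist p.1 p.2 < s + 2 * ε m}).toReal + ε m := by
      have := ENNReal.toReal_mono hfinA kA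
      rwa [ENNReal.toReal_add (measure_ne_top _ _) ENNReal.ofReal_ne_top,
        ENNReal.toReal_ofReal he.le] at this
    have hB : ((μ.prod μ) {p | dist p.1 p.2 < s - 2 * ε m}).toReal
        ≤ (μ {x | dist x (f^[m] x) < s}).toReal + ε m := by
      have := ENNReal.toReal_mono hfinB kB
      rwa [ENNReal.toReal_add (measure_ne_top _ _) ENNReal.ofReal_ne_top,
        ENNReal.toReal_ofReal he.le] at this
    have hLip1 := hLip s (s + 2 * ε m) (by linarith) (by linarith)
    have hLip2 := hLip (s - 2 * ε m) s (by linarith) (by linarith)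
    rw [abs_le]
    constructor
    · have : s - 2 * ε m - s = -(2 * ε m) := by ring
      nlinarith [hLip2, hB]
    · nlinarith [hLip1, hA]
  -- conclusion by squeezing
  refine squeeze_zero' (Eventually.of_forall fun m => Real.iSup_nonneg fun s => abs_nonneg _)
    ?_ ?_ (g := fun m => (2 * K + 1) * ε m)
  · filter_upwards [eventually_ge_atTop 1,
      hεlim.eventually_lt_const (show (0:ℝ) < 1/2 by norm_num)] with m h1 h2
    exact ciSup_le fun s => bound m h1 h2.le s
  · simpa using hεlim.const_mul (2 * K + 1)
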